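/- Let x = ξ_1/2 + ξ_2/2² + ... + ξ_m/2^m be an m-bit dyadic rational in [0,1) with digits ξ_l ∈ {0,1}. Then for each j ∈ {0,...,m-1}, 2^{-j} · Σ_{k=2^j}^{2^{j+1}-1} wal_k(x) equals (-1)^{ξ_{j+1}} if ξ_1 = ξ_2 = ... = ξ_j = 0, and equals 0 otherwise. -/

import Mathlib

/-- the `i`-th dyadic digit `ξ_i` of `x ∈ [0,1)` (for `i ≥ 1`). -/
noncomputable def dyadicDigit (x : ℝ) (i : ℕ) : ℕ := (Int.toNat ⌊x * 2 ^ i⌋) % 2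

/-- the `k`-th dyadic Walsh function. -/
noncomputable def walsh (k : ℕ) (x : ℝ) : ℝ :=
  (-1) ^ (∑ i ∈ Finset.range (Nat.size k), if Nat.testBit k i then dyadicDigit x (i + 1) else 0)

lemma geom_aux (n : ℕ) : ∑ t ∈ Finset.range n, ((1 : ℝ)/2) ^ (t + 1) ≤ 1 - (1/2) ^ n := by
  induction n with
  | zero => simp
  | succ n ih =>
    rw [Finset.sum_range_succ]
    have : ((1 : ℝ)/2) ^ (n + 1) ≤ (1/2) ^ n - (1/2) ^ (n+1) := by
      rw [pow_succ]
      nlinarith [pow_pos (by norm_num : (0:ℝ) < 1/2) n]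
    linarith

lemma floor_eq (m : ℕ) (ξ : ℕ → ℕ) (hξ : ∀ l, ξ l ≤ 1) (x : ℝ)
    (hx : x = ∑ l ∈ Finset.range m, (ξ (l + 1) : ℝ) / 2 ^ (l + 1))
    (i : ℕ) (h2 : i ≤ m) :
    ⌊x * 2 ^ i⌋ = ((∑ l ∈ Finset.range i, ξ (l + 1) * 2 ^ (i - 1 - l) : ℕ) : ℤ) := by
  have key : x * 2 ^ i =
      ((∑ l ∈ Finset.range i, ξ (l + 1) * 2 ^ (i - 1 - l) : ℕ) : ℝ)
        + ∑ l ∈ Finset.Ico i m, (ξ (l + 1) : ℝ) / 2 ^ (l + 1 - i) := by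
    rw [hx, Finset.sum_mul]
    rw [Finset.range_eq_Ico, ← Finset.sum_Ico_consecutive _ (Nat.zero_le i) h2]
    push_cast
    congr 1
    · rw [Finset.range_eq_Ico]
      refine Finset.sum_congr rfl fun l hl => ?_
      rw [Finset.mem_Ico] at hl
      have hli : l + 1 ≤ i := hl.2
      have : (2 : ℝ) ^ (i - 1 - l) = 2 ^ i / 2 ^ (l + 1) := by
        rw [eq_div_iff (by positivity), ← pow_add]
        congr 1
        omega
      rw [this]
      ring
    · refine Finset.sum_congr rfl fun l hl => ?_
      rw [Finset.mem_Ico] at hl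
      have hli : i ≤ l + 1 := by omega
      have : (2 : ℝ) ^ (l + 1 - i) = 2 ^ (l + 1) / 2 ^ i := by
        rw [eq_div_iff (by positivity), ← pow_add]
        congr 1
        omega
      rw [this]
      field_simp
  rw [key]
  rw [add_comm, Int.floor_add_natCast]
  have h0 : (0 : ℝ) ≤ ∑ l ∈ Finset.Ico i m, (ξ (l + 1) : ℝ) / 2 ^ (l + 1 - i) := by
    apply Finset.sum_nonneg
    intro l _
    positivity
  have h1 : ∑ l ∈ Finset.Ico i m, (ξ (l + 1) : ℝ) / 2 ^ (l + 1 - i) < 1 := by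
    have hb : ∑ l ∈ Finset.Ico i m, (ξ (l + 1) : ℝ) / 2 ^ (l + 1 - i)
        ≤ ∑ l ∈ Finset.Ico i m, ((1:ℝ)/2) ^ (l - i + 1) := by
      apply Finset.sum_le_sum
      intro l hl
      rw [Finset.mem_Ico] at hl
      have : l - i + 1 = l + 1 - i := by omega
      rw [this, div_pow, one_pow]
      apply div_le_div_of_nonneg_right _ (by positivity)
      exact_mod_cast hξ (l + 1)
    have hr : ∑ l ∈ Finset.Ico i m, ((1:ℝ)/2) ^ (l - i + 1)
        = ∑ t ∈ Finset.range (m - i), ((1:ℝ)/2) ^ (t + 1) := by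
      rw [Finset.sum_Ico_eq_sum_range]
      refine Finset.sum_congr rfl fun t _ => ?_
      congr 1
      omega
    have := geom_aux (m - i)
    have hp : (0:ℝ) < (1/2) ^ (m - i) := by positivity
    linarith [hb, hr ▸ hb]
  rw [Int.floor_eq_zero_iff.mpr ⟨h0, h1⟩, zero_add]

lemma digit_eq (m : ℕ) (ξ : ℕ → ℕ) (hξ : ∀ l, ξ l ≤ 1) (x : ℝ)
    (hx : x = ∑ l ∈ Finset.range m, (ξ (l + 1) : ℝ) / 2 ^ (l + 1))
    (i : ℕ) (h1 : 1 ≤ i) (h2 : i ≤ m) : dyadicDigit x i = ξ i := by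
  unfold dyadicDigit
  rw [floor_eq m ξ hξ x hx i h2, Int.toNat_natCast]
  obtain ⟨i', rfl⟩ : ∃ i', i = i' + 1 := ⟨i - 1, by omega⟩
  rw [Finset.sum_range_succ]
  have hd : 2 ∣ ∑ l ∈ Finset.range i', ξ (l + 1) * 2 ^ (i' + 1 - 1 - l) := by
    apply Finset.dvd_sum
    intro l hl
    rw [Finset.mem_range] at hl
    exact Dvd.dvd.mul_left (dvd_pow_self 2 (by omega : i' + 1 - 1 - l ≠ 0)) _
  obtain ⟨c, hc⟩ := hd
  have hlast : i' + 1 - 1 - i' = 0 := by omega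
  rw [hc, hlast, pow_zero, mul_one]
  have := hξ (i' + 1)
  omega

lemma block_sum (ξ : ℕ → ℕ) (hξ : ∀ l, ξ l ≤ 1) (j : ℕ) :
    ∑ t ∈ Finset.range (2 ^ j),
      (-1 : ℝ) ^ (∑ i ∈ Finset.range j, if Nat.testBit t i then ξ (i + 1) else 0) =
      if ∀ i < j, ξ (i + 1) = 0 then (2 : ℝ) ^ j else 0 := by
  induction j with
  | zero => simp
  | succ j ih =>
    have hsplit : (2 : ℕ) ^ (j + 1) = 2 ^ j + 2 ^ j := by ring
    rw [hsplit, Finset.sum_range_add]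
    have h1 : ∀ t ∈ Finset.range (2 ^ j),
        (-1 : ℝ) ^ (∑ i ∈ Finset.range (j + 1), if Nat.testBit t i then ξ (i + 1) else 0)
        = (-1 : ℝ) ^ (∑ i ∈ Finset.range j, if Nat.testBit t i then ξ (i + 1) else 0) := by
      intro t ht
      rw [Finset.mem_range] at ht
      rw [Finset.sum_range_succ, Nat.testBit_lt_two_pow ht]
      simp
    have h2 : ∀ t ∈ Finset.range (2 ^ j),
        (-1 : ℝ) ^ (∑ i ∈ Finset.range (j + 1),
            if Nat.testBit (2 ^ j + t) i then ξ (i + 1) else 0)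
        = (-1 : ℝ) ^ (ξ (j + 1)) *
          (-1 : ℝ) ^ (∑ i ∈ Finset.range j, if Nat.testBit t i then ξ (i + 1) else 0) := by
      intro t ht
      rw [Finset.mem_range] at ht
      rw [Finset.sum_range_succ, Nat.testBit_two_pow_add_eq, Nat.testBit_lt_two_pow ht]
      have heq : ∀ i ∈ Finset.range j,
          (if Nat.testBit (2 ^ j + t) i then ξ (i + 1) else 0)
            = (if Nat.testBit t i then ξ (i + 1) else 0) := by
        intro i hi
        rw [Finset.mem_range] at hi
        rw [Nat.testBit_two_pow_add_gt hi]
      rw [Finset.sum_congr rfl heq]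
      simp [pow_add, mul_comm]
    rw [Finset.sum_congr rfl h1, Finset.sum_congr rfl h2, ← Finset.mul_sum, ih]
    by_cases hC' : ∀ i < j + 1, ξ (i + 1) = 0
    · have hC : ∀ i < j, ξ (i + 1) = 0 := fun i hi => hC' i (by omega)
      have hj1 : ξ (j + 1) = 0 := hC' j (by omega)
      rw [if_pos hC, if_pos hC', hj1]
      ring
    · rw [if_neg hC']
      by_cases hC : ∀ i < j, ξ (i + 1) = 0
      · have hj1 : ξ (j + 1) = 1 := by
          have h0 : ξ (j + 1) ≠ 0 := by
            intro h
            exact hC' (fun i hi => by rcases Nat.lt_succ_iff_lt_or_eq.mp hi with h' | h'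
                                      · exact hC i h'
                                      · subst h'; exact h)
          have := hξ (j + 1)
          omega
        rw [if_pos hC, hj1]
        ring
      · rw [if_neg hC]
        ring

theorem sum_walsh_block (m : ℕ) (hm : 1 ≤ m) (ξ : ℕ → ℕ) (hξ : ∀ l, ξ l ≤ 1) (x : ℝ)
    (hx : x = ∑ l ∈ Finset.range m, (ξ (l + 1) : ℝ) / 2 ^ (l + 1))
    (j : ℕ) (hj : j < m) :
    (1 / 2 ^ j : ℝ) * ∑ k ∈ Finset.Icc (2 ^ j) (2 ^ (j + 1) - 1), walsh k x =
      if ∀ l, 1 ≤ l → l ≤ j → ξ l = 0 then (-1 : ℝ) ^ (ξ (j + 1)) else 0 := by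
  have hpow : (2 : ℕ) ^ (j + 1) = 2 ^ j + 2 ^ j := by ring
  have hIcc : Finset.Icc (2 ^ j) (2 ^ (j + 1) - 1) = Finset.Ico (2 ^ j) (2 ^ (j + 1)) := by
    rw [← Finset.Ico_add_one_right_eq_Icc]
    congr 1
    have : 1 ≤ (2 : ℕ) ^ (j + 1) := Nat.one_le_two_pow
    omega
  rw [hIcc, Finset.sum_Ico_eq_sum_range]
  have hsub : 2 ^ (j + 1) - 2 ^ j = 2 ^ j := by rw [hpow, Nat.add_sub_cancel]
  rw [hsub]
  have hterm : ∀ t ∈ Finset.range (2 ^ j), walsh (2 ^ j + t) x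
      = (-1 : ℝ) ^ (ξ (j + 1)) *
        (-1 : ℝ) ^ (∑ i ∈ Finset.range j, if Nat.testBit t i then ξ (i + 1) else 0) := by
    intro t ht
    rw [Finset.mem_range] at ht
    have hsize : Nat.size (2 ^ j + t) = j + 1 :=
      le_antisymm (Nat.size_le.mpr (by rw [hpow]; omega)) (Nat.lt_size.mpr (Nat.le_add_right _ _))
    unfold walsh
    rw [hsize, Finset.sum_range_succ, Nat.testBit_two_pow_add_eq, Nat.testBit_lt_two_pow ht,
      digit_eq m ξ hξ x hx (j + 1) (by omega) (by omega)]
    have heq : ∀ i ∈ Finset.range j,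
        (if Nat.testBit (2 ^ j + t) i then dyadicDigit x (i + 1) else 0)
          = (if Nat.testBit t i then ξ (i + 1) else 0) := by
      intro i hi
      rw [Finset.mem_range] at hi
      rw [Nat.testBit_two_pow_add_gt hi,
        digit_eq m ξ hξ x hx (i + 1) (by omega) (by omega)]
    rw [Finset.sum_congr rfl heq]
    simp [pow_add, mul_comm]
  rw [Finset.sum_congr rfl hterm, ← Finset.mul_sum, block_sum ξ hξ j]
  have hcond : (∀ i < j, ξ (i + 1) = 0) ↔ (∀ l, 1 ≤ l → l ≤ j → ξ l = 0) := by
    constructor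
    · intro h l h1 h2
      have := h (l - 1) (by omega)
      rwa [Nat.sub_add_cancel h1] at this
    · intro h i hi
      exact h (i + 1) (by omega) (by omega)
  by_cases hC : ∀ l, 1 ≤ l → l ≤ j → ξ l = 0
  · rw [if_pos (hcond.mpr hC), if_pos hC]
    have h2j : (2 : ℝ) ^ j ≠ 0 := by positivity
    field_simp
  · rw [if_neg (fun h => hC (hcond.mp h)), if_neg hC]
    ring
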